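/- In any convex semilattice, if an element t is a convex combination of t₁,…,tₙ (i.e., t = (⋯(t₁ +_{p₁} t₂) +_{p₂} ⋯) +_{p_{n−1}} tₙ for some p₁,…,p_{n−1} ∈ (0,1)), then t₁ ⊕ ⋯ ⊕ tₙ = t₁ ⊕ ⋯ ⊕ tₙ ⊕ t. -/

import Mathlib

/-- A convex semilattice: a semilattice `⊕` together with barycentric operations `+ₚ`
(for `p ∈ (0,1)`) satisfying the barycentric algebra axioms and distributivity. -/
class ConvexSemilattice (A : Type*) where
  sup : A → A → A
  pad : ℝ → A → A → A
  sup_assoc : ∀ x y z : A, sup (sup x y) z = sup x (sup y z)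
  sup_comm : ∀ x y : A, sup x y = sup y x
  sup_idem : ∀ x : A, sup x x = x
  pad_idem : ∀ p ∈ Set.Ioo (0:ℝ) 1, ∀ x : A, pad p x x = x
  pad_comm : ∀ p ∈ Set.Ioo (0:ℝ) 1, ∀ x y : A, pad p x y = pad (1 - p) y x
  pad_assoc : ∀ p ∈ Set.Ioo (0:ℝ) 1, ∀ q ∈ Set.Ioo (0:ℝ) 1, ∀ x y z : A,
    pad p (pad q x y) z = pad (p * q) x (pad (p * (1 - q) / (1 - p * q)) y z)
  distrib : ∀ p ∈ Set.Ioo (0:ℝ) 1, ∀ x y z : A,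
    pad p (sup x y) z = sup (pad p x z) (pad p y z)

open ConvexSemilattice

section Aux

variable {A : Type*} [ConvexSemilattice A]

instance : Std.Associative (ConvexSemilattice.sup (A := A)) := ⟨sup_assoc⟩
instance : Std.Commutative (ConvexSemilattice.sup (A := A)) := ⟨sup_comm⟩

lemma distrib' {p : ℝ} (hp : p ∈ Set.Ioo (0:ℝ) 1) (x y z : A) :
    pad p x (sup y z) = sup (pad p x y) (pad p x z) := by
  have hp' : 1 - p ∈ Set.Ioo (0:ℝ) 1 := ⟨by linarith [hp.2], by linarith [hp.1]⟩
  rw [pad_comm p hp, distrib (1-p) hp', ← pad_comm p hp, ← pad_comm p hp]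

lemma key {p : ℝ} (hp : p ∈ Set.Ioo (0:ℝ) 1) (x y : A) :
    sup x y = sup (sup x y) (pad p x y) := by
  have h1 : sup x y = sup (sup x (pad p x y)) (sup (pad p y x) y) := by
    conv_lhs => rw [← pad_idem p hp (sup x y)]
    rw [distrib p hp, distrib' hp, distrib' hp, pad_idem p hp, pad_idem p hp]
  rw [h1]
  have h2 : sup (sup (sup x (pad p x y)) (sup (pad p y x) y)) (pad p x y)
      = sup (sup x (sup (pad p x y) (pad p x y))) (sup (pad p y x) y) := by ac_rfl
  rw [h2, ConvexSemilattice.sup_idem]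

lemma aux : ∀ (l : List (ℝ × A)), (∀ q ∈ l, q.1 ∈ Set.Ioo (0:ℝ) 1) → ∀ s c : A,
    s = sup s c →
    (l.foldl (fun acc q => sup acc q.2) s) =
      sup (l.foldl (fun acc q => sup acc q.2) s)
        (l.foldl (fun acc q => pad q.1 acc q.2) c) := by
  intro l
  induction l with
  | nil => intro _ s c h; simpa using h
  | cons q l ih =>
    intro hl s c hsc
    obtain ⟨p, t⟩ := q
    have hp : p ∈ Set.Ioo (0:ℝ) 1 := hl (p, t) List.mem_cons_self
    simp only [List.foldl_cons]
    apply ih (fun q hq => hl q (List.mem_cons_of_mem _ hq))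
    have hk := key hp c t
    calc sup s t = sup (sup s c) t := by rw [← hsc]
      _ = sup s (sup c t) := by rw [ConvexSemilattice.sup_assoc]
      _ = sup s (sup (sup c t) (pad p c t)) := by rw [← hk]
      _ = sup (sup (sup s c) t) (pad p c t) := by ac_rfl
      _ = sup (sup s t) (pad p c t) := by rw [← hsc]

end Aux

/-- If `t` is an iterated convex combination `(⋯(t₁ +_{p₁} t₂) +_{p₂} ⋯) +_{p_{n-1}} tₙ`
of `t₁, …, tₙ` (encoded by a head `t₁` and a list of pairs `(pᵢ, tᵢ₊₁)`), then
`t₁ ⊕ ⋯ ⊕ tₙ = t₁ ⊕ ⋯ ⊕ tₙ ⊕ t`. -/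
theorem sup_absorb_convex_combination {A : Type*} [ConvexSemilattice A]
    (t₁ : A) (l : List (ℝ × A)) (hl : ∀ q ∈ l, q.1 ∈ Set.Ioo (0:ℝ) 1) :
    (l.foldl (fun acc q => sup acc q.2) t₁) =
      sup (l.foldl (fun acc q => sup acc q.2) t₁)
        (l.foldl (fun acc q => pad q.1 acc q.2) t₁) := by
  exact aux l hl t₁ t₁ (by rw [ConvexSemilattice.sup_idem])
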